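/- For integers n ≥ 1 and k ≥ 0, in the stuffle algebra one has z_1^{n+k} * z_1^n − z_1^{n+k+1} * z_1^{n−1} = ∑_{l=0}^{n} ((k+1)/(l+k+1)) · C(2l+k, l) · (z_2^{n−l} ▿ z_1^{2l+k}), where the coefficient (k+1)/(l+k+1)·C(2l+k,l) equals C(2l+k,l) − C(2l+k,l−1) (a ballot number) and is a nonnegative integer. -/

import Mathlib

/-- The stuffle (harmonic) product on words in letters `z_k`, valued in formal
`ℚ`-linear combinations of words. -/
noncomputable def stuffle : List ℕ → List ℕ → (List ℕ →₀ ℚ)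
  | [], v => Finsupp.single v 1
  | u, [] => Finsupp.single u 1
  | i :: u, j :: v =>
      Finsupp.mapDomain (List.cons i) (stuffle u (j :: v)) +
      Finsupp.mapDomain (List.cons j) (stuffle (i :: u) v) +
      Finsupp.mapDomain (List.cons (i + j)) (stuffle u v)
  termination_by u v => u.length + v.length
  decreasing_by all_goals simp [List.length_cons] <;> omega

/-- The index shuffle product `▿` on words:
`z_i u ▿ z_j v = z_i(u ▿ z_j v) + z_j(z_i u ▿ v)`. -/
noncomputable def ishuffle : List ℕ → List ℕ → (List ℕ →₀ ℚ)
  | [], v => Finsupp.single v 1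
  | u, [] => Finsupp.single u 1
  | i :: u, j :: v =>
      Finsupp.mapDomain (List.cons i) (ishuffle u (j :: v)) +
      Finsupp.mapDomain (List.cons j) (ishuffle (i :: u) v)
  termination_by u v => u.length + v.length
  decreasing_by all_goals simp [List.length_cons] <;> omega

namespace StuffleAux

noncomputable def L (a : ℕ) : (List ℕ →₀ ℚ) →ₗ[ℚ] (List ℕ →₀ ℚ) :=
  Finsupp.lmapDomain ℚ ℚ (List.cons a)

lemma L_apply (a : ℕ) (f : List ℕ →₀ ℚ) : L a f = Finsupp.mapDomain (List.cons a) f := rfl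

lemma stuffle_nil (v : List ℕ) : stuffle [] v = Finsupp.single v 1 := by simp [stuffle]

lemma stuffle_nil_right (u : List ℕ) : stuffle u [] = Finsupp.single u 1 := by
  cases u <;> simp [stuffle]

lemma stuffle_cons (i j : ℕ) (u v : List ℕ) : stuffle (i::u) (j::v) =
    Finsupp.mapDomain (List.cons i) (stuffle u (j :: v)) +
    Finsupp.mapDomain (List.cons j) (stuffle (i :: u) v) +
    Finsupp.mapDomain (List.cons (i + j)) (stuffle u v) := by simp [stuffle]

lemma ishuffle_nil (v : List ℕ) : ishuffle [] v = Finsupp.single v 1 := by simp [ishuffle]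

lemma ishuffle_nil_right (u : List ℕ) : ishuffle u [] = Finsupp.single u 1 := by
  cases u <;> simp [ishuffle]

lemma ishuffle_cons (i j : ℕ) (u v : List ℕ) : ishuffle (i::u) (j::v) =
    Finsupp.mapDomain (List.cons i) (ishuffle u (j :: v)) +
    Finsupp.mapDomain (List.cons j) (ishuffle (i :: u) v) := by simp [ishuffle]

theorem stuffle_comm (u v : List ℕ) : stuffle u v = stuffle v u := by
  cases u with
  | nil => rw [stuffle_nil, stuffle_nil_right]
  | cons i u =>
    cases v with
    | nil => rw [stuffle_nil, stuffle_nil_right]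
    | cons j v =>
      rw [stuffle_cons, stuffle_cons, stuffle_comm u (j::v), stuffle_comm (i::u) v,
        stuffle_comm u v, Nat.add_comm i j]
      abel
termination_by u.length + v.length
decreasing_by all_goals simp [List.length_cons] <;> omega

/-- `Sw m n = z₁^m * z₁^n`. -/
noncomputable def Sw (m n : ℕ) : List ℕ →₀ ℚ :=
  stuffle (List.replicate m 1) (List.replicate n 1)

/-- `Iw a b = z₂^a ▿ z₁^b`. -/
noncomputable def Iw (a b : ℕ) : List ℕ →₀ ℚ :=
  ishuffle (List.replicate a 2) (List.replicate b 1)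

lemma Sw_comm (m n : ℕ) : Sw m n = Sw n m := stuffle_comm _ _

lemma Sw_zero_right (m : ℕ) : Sw m 0 = Finsupp.single (List.replicate m 1) 1 := by
  rw [Sw, List.replicate_zero, stuffle_nil_right]

lemma Sw_succ_succ (m n : ℕ) : Sw (m+1) (n+1) =
    L 1 (Sw m (n+1)) + L 1 (Sw (m+1) n) + L 2 (Sw m n) := by
  have h1 : List.replicate (m+1) 1 = 1 :: List.replicate m 1 := rfl
  have h2 : List.replicate (n+1) 1 = 1 :: List.replicate n 1 := rfl
  rw [Sw, h1, h2, stuffle_cons, ← h1, ← h2]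
  rfl

lemma Iw_zero_left (b : ℕ) : Iw 0 b = Finsupp.single (List.replicate b 1) 1 := by
  rw [Iw, List.replicate_zero, ishuffle_nil]

lemma Iw_zero_right (a : ℕ) : Iw a 0 = Finsupp.single (List.replicate a 2) 1 := by
  rw [Iw, List.replicate_zero, ishuffle_nil_right]

lemma Iw_succ_succ (a b : ℕ) : Iw (a+1) (b+1) = L 2 (Iw a (b+1)) + L 1 (Iw (a+1) b) := by
  have h1 : List.replicate (a+1) 2 = 2 :: List.replicate a 2 := rfl
  have h2 : List.replicate (b+1) 1 = 1 :: List.replicate b 1 := rfl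
  rw [Iw, h1, h2, ishuffle_cons, ← h1, ← h2]
  rfl

lemma Iw_zero_succ (b : ℕ) : Iw 0 (b+1) = L 1 (Iw 0 b) := by
  rw [Iw_zero_left, Iw_zero_left, L_apply, Finsupp.mapDomain_single]
  rfl

lemma Iw_succ_zero (a : ℕ) : Iw (a+1) 0 = L 2 (Iw a 0) := by
  rw [Iw_zero_right, Iw_zero_right, L_apply, Finsupp.mapDomain_single]
  rfl

/-- The right-hand side of Chen's formula. -/
noncomputable def T (n d : ℕ) : List ℕ →₀ ℚ :=
  ∑ l ∈ Finset.range (n+1), (Nat.choose (2*l+d) l : ℚ) • Iw (n-l) (2*l+d)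

lemma Tsucc (n e : ℕ) : T (n+1) (e+1) = L 1 (T (n+1) e) + L 1 (T n (e+2)) + L 2 (T n (e+1)) := by
  have key : ∀ l ∈ Finset.range (n+2),
      (Nat.choose (2*l+(e+1)) l : ℚ) • Iw (n+1-l) (2*l+(e+1)) =
      (Nat.choose (2*l+(e+1)) l : ℚ) • L 1 (Iw (n+1-l) (2*l+e)) +
      (if l ≤ n then (Nat.choose (2*l+(e+1)) l : ℚ) • L 2 (Iw (n-l) (2*l+(e+1))) else 0) := by
    intro l hl
    simp only [Finset.mem_range] at hl
    rcases Nat.lt_or_ge l (n+1) with h | h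
    · rw [if_pos (by omega : l ≤ n), show n+1-l = (n-l)+1 by omega,
        show 2*l+(e+1) = (2*l+e)+1 by ring, Iw_succ_succ, smul_add,
        show (2*l+e)+1 = 2*l+(e+1) by ring]
      abel
    · have hl1 : l = n + 1 := by omega
      subst hl1
      rw [if_neg (by omega), add_zero, show n+1-(n+1) = 0 by omega,
        show 2*(n+1)+(e+1) = (2*(n+1)+e)+1 by ring, Iw_zero_succ]
  rw [T, Finset.sum_congr rfl key, Finset.sum_add_distrib]
  have hB : (∑ l ∈ Finset.range (n+2),
      if l ≤ n then (Nat.choose (2*l+(e+1)) l : ℚ) • L 2 (Iw (n-l) (2*l+(e+1))) else 0)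
      = L 2 (T n (e+1)) := by
    rw [Finset.sum_range_succ, if_neg (by omega), add_zero, T, map_sum]
    refine Finset.sum_congr rfl fun l hl => ?_
    simp only [Finset.mem_range] at hl
    rw [if_pos (by omega : l ≤ n), map_smul]
  have hA : (∑ l ∈ Finset.range (n+2),
      (Nat.choose (2*l+(e+1)) l : ℚ) • L 1 (Iw (n+1-l) (2*l+e)))
      = L 1 (T (n+1) e) + L 1 (T n (e+2)) := by
    have step : ∀ j ∈ Finset.range (n+1),
        (Nat.choose (2*(j+1)+(e+1)) (j+1) : ℚ) • L 1 (Iw (n+1-(j+1)) (2*(j+1)+e)) =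
        (Nat.choose (2*j+(e+2)) j : ℚ) • L 1 (Iw (n-j) (2*j+(e+2))) +
        (Nat.choose (2*j+(e+2)) (j+1) : ℚ) • L 1 (Iw (n-j) (2*j+(e+2))) := by
      intro j hj
      rw [show 2*(j+1)+(e+1) = (2*j+(e+2))+1 by ring, Nat.choose_succ_succ,
        show n+1-(j+1) = n-j by omega, show 2*(j+1)+e = 2*j+(e+2) by ring]
      push_cast
      rw [add_smul]
    have e1 : L 1 (T (n+1) e) =
        (∑ j ∈ Finset.range (n+1),
          (Nat.choose (2*j+(e+2)) (j+1) : ℚ) • L 1 (Iw (n-j) (2*j+(e+2)))) +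
        (Nat.choose (2*0+(e+1)) 0 : ℚ) • L 1 (Iw (n+1-0) (2*0+e)) := by
      rw [T, map_sum, Finset.sum_range_succ']
      congr 1
      · refine Finset.sum_congr rfl fun j hj => ?_
        rw [map_smul, show 2*(j+1)+e = 2*j+(e+2) by ring, show n+1-(j+1) = n-j by omega]
      · rw [map_smul]
        norm_num
    have e2 : L 1 (T n (e+2)) =
        ∑ j ∈ Finset.range (n+1),
          (Nat.choose (2*j+(e+2)) j : ℚ) • L 1 (Iw (n-j) (2*j+(e+2))) := by
      rw [T, map_sum]
      exact Finset.sum_congr rfl fun l _ => map_smul _ _ _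
    rw [Finset.sum_range_succ', Finset.sum_congr rfl step, Finset.sum_add_distrib, e1, e2]
    abel
  rw [hA, hB]

lemma Tzero (n : ℕ) : T (n+1) 0 = L 1 (T n 1) + L 1 (T n 1) + L 2 (T n 0) := by
  have key : ∀ l ∈ Finset.range (n+2),
      (Nat.choose (2*l+0) l : ℚ) • Iw (n+1-l) (2*l+0) =
      (if l ≤ n then (Nat.choose (2*l+0) l : ℚ) • L 2 (Iw (n-l) (2*l+0)) else 0) +
      (if 1 ≤ l then (Nat.choose (2*l+0) l : ℚ) • L 1 (Iw (n+1-l) (2*l-1)) else 0) := by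
    intro l hl
    simp only [Finset.mem_range] at hl
    rcases Nat.eq_zero_or_pos l with h0 | h0
    · subst h0
      rw [if_pos (by omega : (0:ℕ) ≤ n), if_neg (by omega), show n+1-0 = n+1 from rfl,
        show n-0 = n by omega, show 2*0+0 = 0 by ring, add_zero, Iw_succ_zero]
    · rcases Nat.lt_or_ge l (n+1) with h | h
      · rw [if_pos (by omega : l ≤ n), if_pos (by omega : 1 ≤ l),
          show n+1-l = (n-l)+1 by omega, show 2*l+0 = (2*l-1)+1 by omega,
          Iw_succ_succ, smul_add, show (2*l-1)+1 = 2*l+0 by omega]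
      · have hl1 : l = n + 1 := by omega
        subst hl1
        rw [if_neg (by omega), if_pos (by omega : 1 ≤ n+1), zero_add,
          show n+1-(n+1) = 0 by omega, show 2*(n+1)+0 = (2*(n+1)-1)+1 by omega,
          Iw_zero_succ]
  rw [T, Finset.sum_congr rfl key, Finset.sum_add_distrib]
  have hB : (∑ l ∈ Finset.range (n+2),
      if l ≤ n then (Nat.choose (2*l+0) l : ℚ) • L 2 (Iw (n-l) (2*l+0)) else 0)
      = L 2 (T n 0) := by
    rw [Finset.sum_range_succ, if_neg (by omega), add_zero, T, map_sum]
    refine Finset.sum_congr rfl fun l hl => ?_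
    simp only [Finset.mem_range] at hl
    rw [if_pos (by omega : l ≤ n), map_smul]
  have hA : (∑ l ∈ Finset.range (n+2),
      if 1 ≤ l then (Nat.choose (2*l+0) l : ℚ) • L 1 (Iw (n+1-l) (2*l-1)) else 0)
      = L 1 (T n 1) + L 1 (T n 1) := by
    rw [Finset.sum_range_succ', if_neg (by omega), add_zero]
    have step : ∀ j ∈ Finset.range (n+1),
        (if 1 ≤ j+1 then
          (Nat.choose (2*(j+1)+0) (j+1) : ℚ) • L 1 (Iw (n+1-(j+1)) (2*(j+1)-1)) else 0) =
        (Nat.choose (2*j+1) j : ℚ) • L 1 (Iw (n-j) (2*j+1)) +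
        (Nat.choose (2*j+1) j : ℚ) • L 1 (Iw (n-j) (2*j+1)) := by
      intro j hj
      have hc : Nat.choose (2*(j+1)+0) (j+1) = Nat.choose (2*j+1) j + Nat.choose (2*j+1) j := by
        rw [show 2*(j+1)+0 = (2*j+1)+1 by ring, Nat.choose_succ_succ]
        congr 1
        exact ((Nat.choose_symm (show j+1 ≤ 2*j+1 by omega)).symm).trans
          (by rw [show 2*j+1-(j+1) = j by omega])
      rw [if_pos (by omega : 1 ≤ j+1), hc, show n+1-(j+1) = n-j by omega,
        show 2*(j+1)-1 = 2*j+1 by omega]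
      push_cast
      rw [add_smul]
    rw [Finset.sum_congr rfl step, Finset.sum_add_distrib]
    have h1 : (∑ j ∈ Finset.range (n+1),
        (Nat.choose (2*j+1) j : ℚ) • L 1 (Iw (n-j) (2*j+1))) = L 1 (T n 1) := by
      rw [T, map_sum]
      exact Finset.sum_congr rfl fun l _ => (map_smul _ _ _).symm
    rw [h1]
  rw [hA, hB]
  abel

theorem chen : ∀ n d : ℕ, Sw (n+d) n = T n d := by
  intro n
  induction n with
  | zero =>
    intro d
    rw [show 0+d = d by omega, Sw_zero_right, T, Finset.sum_range_one,
      show 2*0+d = d by ring, Nat.choose_zero_right, show 0-0 = 0 by omega, Iw_zero_left]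
    push_cast
    rw [one_smul]
  | succ n ih =>
    intro d
    induction d with
    | zero =>
      have h1 := ih 1
      have h0 := ih 0
      rw [show n+0 = n by omega] at h0
      rw [show n+1+0 = n+1 by omega, Sw_succ_succ, Sw_comm n (n+1), h1, h0, Tzero]
    | succ e ihd =>
      have h2 := ih (e+2)
      rw [show n+(e+2) = n+(e+1)+1 by omega] at h2
      have h1 := ih (e+1)
      have h0 : Sw (n+(e+1)) (n+1) = T (n+1) e := by
        rw [show n+(e+1) = n+1+e by omega]
        exact ihd
      rw [show n+1+(e+1) = (n+(e+1))+1 by omega, Sw_succ_succ, h0, h2, h1, Tsucc]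

lemma ballot (k j : ℕ) :
    ((k:ℚ)+1)/(((j+1 : ℕ):ℚ)+(k:ℚ)+1) * (Nat.choose (2*j+(k+2)) (j+1) : ℚ) +
      (Nat.choose (2*j+(k+2)) j : ℚ) = (Nat.choose (2*j+(k+2)) (j+1) : ℚ) := by
  have h := Nat.choose_succ_right_eq (2*j+(k+2)) j
  rw [show 2*j+(k+2) - j = j+(k+2) by omega] at h
  have h' : (Nat.choose (2*j+(k+2)) (j+1) : ℚ) * ((j:ℚ)+1) =
      (Nat.choose (2*j+(k+2)) j : ℚ) * ((j:ℚ)+(k:ℚ)+2) := by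
    exact_mod_cast congrArg (Nat.cast : ℕ → ℚ) h
  have hd : ((j+1 : ℕ):ℚ)+(k:ℚ)+1 ≠ 0 := by push_cast; positivity
  field_simp
  push_cast
  push_cast at h'
  ring_nf
  ring_nf at h'
  linarith [h']

end StuffleAux

open StuffleAux in
/-- For `n ≥ 1`, `k ≥ 0`:
`z₁^{n+k} * z₁^n − z₁^{n+k+1} * z₁^{n−1}
  = ∑_{l=0}^{n} ((k+1)/(l+k+1))·C(2l+k, l)·(z₂^{n−l} ▿ z₁^{2l+k})`,
where the coefficient `(k+1)/(l+k+1)·C(2l+k,l)` is a ballot number. -/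
theorem stuffle_difference_ballot (n k : ℕ) (hn : 1 ≤ n) :
    stuffle (List.replicate (n + k) 1) (List.replicate n 1)
      - stuffle (List.replicate (n + k + 1) 1) (List.replicate (n - 1) 1) =
    ∑ l ∈ Finset.range (n + 1),
      ((((k : ℚ) + 1) / ((l : ℚ) + (k : ℚ) + 1)) * (Nat.choose (2 * l + k) l : ℚ)) •
        ishuffle (List.replicate (n - l) 2) (List.replicate (2 * l + k) 1) := by
  obtain ⟨m, rfl⟩ : ∃ m, n = m + 1 := ⟨n - 1, by omega⟩
  have hIw : ∀ a b : ℕ, ishuffle (List.replicate a 2) (List.replicate b 1) = Iw a b :=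
    fun _ _ => rfl
  have hL : stuffle (List.replicate (m+1+k) 1) (List.replicate (m+1) 1) = T (m+1) k :=
    chen (m+1) k
  have hR : stuffle (List.replicate (m+1+k+1) 1) (List.replicate (m+1-1) 1) = T m (k+2) := by
    rw [show m+1+k+1 = m+(k+2) by omega, show m+1-1 = m by omega]
    exact chen m (k+2)
  rw [hL, hR, sub_eq_iff_eq_add]
  simp only [hIw]
  rw [T, T, Finset.sum_range_succ',
    Finset.sum_range_succ' (fun l => ((((k : ℚ) + 1) / ((l : ℚ) + (k : ℚ) + 1)) *
      (Nat.choose (2 * l + k) l : ℚ)) • Iw (m+1-l) (2*l+k)) (m+1)]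
  rw [add_right_comm, ← Finset.sum_add_distrib]
  congr 1
  · refine Finset.sum_congr rfl fun j hj => ?_
    rw [show m+1-(j+1) = m-j by omega, show 2*(j+1)+k = 2*j+(k+2) by ring, ← add_smul,
      ballot k j]
  · congr 1
    have hk : (k:ℚ)+1 ≠ 0 := by positivity
    push_cast
    field_simp
    ring
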